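/- Let L = ((C_1,b_1),…,(C_m,b_m)) be a decision list and, for ℓ ∈ [m-1], define μ_ℓ = P_{ρ~R_p}[max(U(L,ρ)) = ℓ and C_ℓ↾ρ ≡ 1]. Then for every ℓ ∈ [m-1], P_{ρ~R_p}[ℓ ∈ U(L,ρ)] ≤ μ_ℓ · ((1+p)/(1-p))^{|C_ℓ|}, where |C_ℓ| is the width of C_ℓ and p ∈ [0,1). -/

import Mathlib

noncomputable def rpWeight {n : ℕ} (p : ℝ) (ρ : Fin n → Option Bool) : ℝ :=
  ∏ i, if ρ i = none then p else (1 - p) / 2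

def clauseSat {n : ℕ} (C : Fin n → Option Bool) (x : Fin n → Bool) : Prop :=
  ∀ i : Fin n, ∀ b : Bool, C i = some b → x i = b

def clauseWidth {n : ℕ} (C : Fin n → Option Bool) : ℕ :=
  (Finset.univ.filter (fun i => C i ≠ none)).card

/-- `C ↾ ρ ≡ 1`: every literal of the clause `C` is satisfied by the restriction `ρ`. -/
def clauseFixedTrue {n : ℕ} (C ρ : Fin n → Option Bool) : Prop :=
  ∀ i : Fin n, ∀ b : Bool, C i = some b → ρ i = some b

def usefulIdx {n : ℕ} {V : Type} (L : List ((Fin n → Option Bool) × V))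
    (ρ : Fin n → Option Bool) (ℓ : Fin L.length) : Prop :=
  ∃ x : Fin n → Bool, clauseSat ρ x ∧ clauseSat (L.get ℓ).1 x ∧
    ∀ j : Fin L.length, j < ℓ → ¬ clauseSat (L.get j).1 x

/-- With `μ_ℓ = P_{ρ~R_p}[max U(L,ρ) = ℓ and C_ℓ↾ρ ≡ 1]`, for every non-final index `ℓ`:
`P_{ρ~R_p}[ℓ ∈ U(L,ρ)] ≤ μ_ℓ · ((1+p)/(1-p))^{|C_ℓ|}`. -/
theorem useful_prob_le_mu {n : ℕ} {V : Type} (L : List ((Fin n → Option Bool) × V))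
    (htaut : ∀ x : Fin n → Bool, ∃ k : Fin L.length, clauseSat (L.get k).1 x)
    (p : ℝ) (hp0 : 0 ≤ p) (hp1 : p < 1)
    (ℓ : Fin L.length) (hℓ : ℓ.val + 1 < L.length) :
    ∑ ρ : Fin n → Option Bool,
        {σ : Fin n → Option Bool | usefulIdx L σ ℓ}.indicator (rpWeight p) ρ
      ≤ (∑ ρ : Fin n → Option Bool,
          {σ : Fin n → Option Bool |
            (usefulIdx L σ ℓ ∧ ∀ ℓ' : Fin L.length, usefulIdx L σ ℓ' → ℓ' ≤ ℓ) ∧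
            clauseFixedTrue (L.get ℓ).1 σ}.indicator (rpWeight p) ρ)
        * ((1 + p) / (1 - p)) ^ clauseWidth (L.get ℓ).1 := by
  classical
  set C := (L.get ℓ).1 with hC
  set T : Finset (Fin n) := Finset.univ.filter (fun i => C i ≠ none) with hT
  set f : Option Bool → ℝ := fun o => if o = none then p else (1 - p) / 2 with hf
  have hw : ∀ ρ : Fin n → Option Bool, rpWeight p ρ = ∏ i, f (ρ i) := fun ρ => rfl
  have hp2 : (0:ℝ) < 1 - p := by linarith
  have hfnn : ∀ o, 0 ≤ f o := by
    intro o; simp only [hf]; split <;> linarith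
  have hwnn : ∀ ρ, 0 ≤ rpWeight p ρ := fun ρ => by
    rw [hw]; exact Finset.prod_nonneg fun i _ => hfnn _
  set A : Finset (Fin n → Option Bool) :=
    Finset.univ.filter (fun ρ => usefulIdx L ρ ℓ) with hA
  set G : Finset (Fin n → Option Bool) := Finset.univ.filter (fun σ =>
    (usefulIdx L σ ℓ ∧ ∀ ℓ' : Fin L.length, usefulIdx L σ ℓ' → ℓ' ≤ ℓ) ∧
      clauseFixedTrue C σ) with hG
  have hLHS : (∑ ρ : Fin n → Option Bool,
      {σ : Fin n → Option Bool | usefulIdx L σ ℓ}.indicator (rpWeight p) ρ)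
      = ∑ ρ ∈ A, rpWeight p ρ := by
    rw [hA, Finset.sum_filter]
    exact Finset.sum_congr rfl fun ρ _ => by simp [Set.indicator_apply]
  have hRHS : (∑ ρ : Fin n → Option Bool,
      {σ : Fin n → Option Bool |
        (usefulIdx L σ ℓ ∧ ∀ ℓ' : Fin L.length, usefulIdx L σ ℓ' → ℓ' ≤ ℓ) ∧
        clauseFixedTrue (L.get ℓ).1 σ}.indicator (rpWeight p) ρ)
      = ∑ σ ∈ G, rpWeight p σ := by
    rw [hG, Finset.sum_filter]
    exact Finset.sum_congr rfl fun ρ _ => by simp [Set.indicator_apply, hC]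
  rw [hLHS, hRHS]
  -- augmentation and rebuilding maps
  set aug : (Fin n → Option Bool) → (Fin n → Option Bool) :=
    fun ρ i => if C i = none then ρ i else C i with haug
  set build : (Fin n → Option Bool) × Finset (Fin n) → (Fin n → Option Bool) :=
    fun q i => if i ∈ q.2 then none else q.1 i with hbuild
  set φ : (Fin n → Option Bool) → (Fin n → Option Bool) × Finset (Fin n) :=
    fun ρ => (aug ρ, T.filter (fun i => ρ i = none)) with hφ
  -- facts about ρ ∈ A
  have hbuildφ : ∀ ρ ∈ A, build (φ ρ) = ρ := by
    intro ρ hρ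
    rw [hA, Finset.mem_filter] at hρ
    obtain ⟨x, hx, hxC, -⟩ := hρ.2
    funext i
    by_cases h1 : ρ i = none
    · by_cases h2 : C i = none <;> simp [hbuild, hφ, haug, hT, h1, h2]
    · rcases h3 : C i with _ | b
      · simp [hbuild, hφ, haug, hT, h1, h3]
      · rcases h4 : ρ i with _ | b'
        · exact absurd h4 h1
        · have hb : b' = b := by rw [← hx i b' h4]; exact hxC i b h3
          simp [hbuild, hφ, haug, hT, h3, h4, hb]
  -- φ maps A into G ×ˢ T.powerset
  have hφmem : ∀ ρ ∈ A, φ ρ ∈ G ×ˢ T.powerset := by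
    intro ρ hρ
    rw [hA, Finset.mem_filter] at hρ
    obtain ⟨x, hx, hxC, hxj⟩ := hρ.2
    rw [Finset.mem_product]
    constructor
    · rw [hG, Finset.mem_filter]
      refine ⟨Finset.mem_univ _, ⟨⟨x, ?_, hxC, hxj⟩, ?_⟩, ?_⟩
      · intro i b hib
        simp only [hφ, haug] at hib
        by_cases h2 : C i = none
        · rw [if_pos h2] at hib; exact hx i b hib
        · rw [if_neg h2] at hib; exact hxC i b hib
      · intro ℓ' hℓ'
        by_contra hgt
        push_neg at hgt
        obtain ⟨y, hy, hyC', hyj⟩ := hℓ'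
        refine hyj ℓ hgt ?_
        intro i b hib
        refine hy i b ?_
        rw [← hC] at hib
        simp [hφ, haug, hib]
      · intro i b hib
        simp [hφ, haug, hib]
    · simp [hφ, Finset.mem_powerset, Finset.filter_subset]
  -- weight identity on G ×ˢ powerset
  have hweight : ∀ q ∈ G ×ˢ T.powerset,
      rpWeight p (build q) = rpWeight p q.1 * (2 * p / (1 - p)) ^ q.2.card := by
    rintro ⟨σ, S⟩ hq
    rw [Finset.mem_product] at hq
    obtain ⟨hσ, hS⟩ := hq
    rw [hG, Finset.mem_filter] at hσ
    rw [Finset.mem_powerset] at hS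
    have hσT : ∀ i ∈ S, f (σ i) = (1 - p) / 2 := by
      intro i hiS
      have hiT := hS hiS
      rw [hT, Finset.mem_filter] at hiT
      rcases h3 : C i with _ | b
      · exact absurd h3 hiT.2
      · have h5 : σ i = some b := hσ.2.2 i b h3
        simp [hf, h5]
    have e1 : rpWeight p (build (σ, S)) = (∏ i ∈ S, (p:ℝ)) * ∏ i ∈ Sᶜ, f (σ i) := by
      rw [hw, ← Finset.prod_mul_prod_compl S]
      congr 1
      · exact Finset.prod_congr rfl fun i hi => by simp [hbuild, hi, hf]
      · exact Finset.prod_congr rfl fun i hi => by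
          simp only [Finset.mem_compl] at hi
          simp [hbuild, hi]
    have e2 : rpWeight p σ = (∏ i ∈ S, ((1 - p) / 2)) * ∏ i ∈ Sᶜ, f (σ i) := by
      rw [hw, ← Finset.prod_mul_prod_compl S]
      congr 1
      exact Finset.prod_congr rfl fun i hi => hσT i hi
    have hfac : (1 - p) / 2 * (2 * p / (1 - p)) = p := by
      field_simp
    rw [e1, e2, Finset.prod_const, Finset.prod_const, mul_right_comm, ← mul_pow, hfac]
  -- main chain
  have step1 : ∑ ρ ∈ A, rpWeight p ρ = ∑ q ∈ A.image φ, rpWeight p (build q) := by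
    rw [Finset.sum_image (fun a ha b hb hab => by
      rw [← hbuildφ a ha, ← hbuildφ b hb, hab])]
    exact Finset.sum_congr rfl fun ρ hρ => by rw [hbuildφ ρ hρ]
  have step2 : ∑ q ∈ A.image φ, rpWeight p (build q)
      ≤ ∑ q ∈ G ×ˢ T.powerset, rpWeight p (build q) := by
    refine Finset.sum_le_sum_of_subset_of_nonneg ?_ (fun q _ _ => hwnn _)
    intro q hq
    obtain ⟨ρ, hρ, rfl⟩ := Finset.mem_image.mp hq
    exact hφmem ρ hρ
  have step3 : ∑ q ∈ G ×ˢ T.powerset, rpWeight p (build q)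
      = (∑ σ ∈ G, rpWeight p σ) * ((1 + p) / (1 - p)) ^ clauseWidth C := by
    rw [Finset.sum_congr rfl hweight, Finset.sum_product, Finset.sum_mul]
    refine Finset.sum_congr rfl fun σ _ => ?_
    dsimp only
    rw [← Finset.mul_sum]
    congr 1
    have hbin : ∑ S ∈ T.powerset, (2 * p / (1 - p)) ^ S.card
        = (2 * p / (1 - p) + 1) ^ T.card := by
      rw [← Finset.prod_const, Finset.prod_add]
      refine (Finset.sum_congr rfl fun S hS => ?_).symm
      simp [Finset.prod_const, div_pow]
    rw [hbin]
    have : 2 * p / (1 - p) + 1 = (1 + p) / (1 - p) := by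
      field_simp; ring
    rw [this]
    rfl
  rw [step1]
  exact step2.trans_eq step3
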